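/- Let p be an odd prime and let G be a group belonging to family 𝒢₄. Then every element w ∈ G with w^p = 1 lies in the center Z(G); equivalently, G contains no noncentral element of order p. -/

import Mathlib

section Helpers
variable {H : Type*} [Group H]

private lemma central_swap_pow {x y c : H} (hc : ∀ g : H, Commute c g)
    (h : y * x = x * y * c) (a b : ℕ) :
    y ^ b * x ^ a = x ^ a * y ^ b * c ^ (a * b) := by
  have key : ∀ n : ℕ, y * x ^ n = x ^ n * y * c ^ n := by
    intro n
    induction n with
    | zero => simp
    | succ n ih =>
      have hcx : c ^ n * x = x * c ^ n := ((hc x).pow_left n).eq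
      calc y * x ^ (n + 1) = y * x ^ n * x := by rw [pow_succ, mul_assoc]
        _ = x ^ n * y * c ^ n * x := by rw [ih]
        _ = x ^ n * (y * (c ^ n * x)) := by group
        _ = x ^ n * (y * (x * c ^ n)) := by rw [hcx]
        _ = x ^ n * ((y * x) * c ^ n) := by group
        _ = x ^ n * ((x * y * c) * c ^ n) := by rw [h]
        _ = x ^ (n + 1) * y * c ^ (n + 1) := by group
  induction b with
  | zero => simp
  | succ b ih =>
    have hcy : c ^ (a * b) * y = y * c ^ (a * b) := ((hc y).pow_left _).eq
    calc y ^ (b + 1) * x ^ a = y ^ b * (y * x ^ a) := by rw [pow_succ']; group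
      _ = y ^ b * (x ^ a * y * c ^ a) := by rw [key a]
      _ = (y ^ b * x ^ a) * y * c ^ a := by group
      _ = (x ^ a * y ^ b * c ^ (a * b)) * y * c ^ a := by rw [ih]
      _ = x ^ a * y ^ b * (c ^ (a * b) * y) * c ^ a := by group
      _ = x ^ a * y ^ b * (y * c ^ (a * b)) * c ^ a := by rw [hcy]
      _ = x ^ a * y ^ (b + 1) * (c ^ (a * b) * c ^ a) := by rw [pow_succ]; group
      _ = x ^ a * y ^ (b + 1) * c ^ (a * (b + 1)) := by rw [← pow_add, Nat.mul_succ]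

private lemma central_pow_formula {x y c : H} (hc : ∀ g : H, Commute c g)
    (h : y * x = x * y * c) (a b n : ℕ) :
    (x ^ a * y ^ b) ^ n = x ^ (a * n) * y ^ (b * n) * c ^ (a * b * n.choose 2) := by
  induction n with
  | zero => simp
  | succ n ih =>
    have hswap := central_swap_pow hc h a (b * n)
    have hce : ∀ g : H, ∀ e : ℕ, c ^ e * g = g * c ^ e := fun g e => ((hc g).pow_left e).eq
    calc (x ^ a * y ^ b) ^ (n + 1) = (x ^ a * y ^ b) ^ n * (x ^ a * y ^ b) := pow_succ _ _
      _ = x ^ (a * n) * y ^ (b * n) * c ^ (a * b * n.choose 2) * (x ^ a * y ^ b) := by rw [ih]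
      _ = x ^ (a * n) * (y ^ (b * n) * (c ^ (a * b * n.choose 2) * x ^ a)) * y ^ b := by group
      _ = x ^ (a * n) * (y ^ (b * n) * (x ^ a * c ^ (a * b * n.choose 2))) * y ^ b := by
            rw [hce (x ^ a)]
      _ = x ^ (a * n) * (y ^ (b * n) * x ^ a) * (c ^ (a * b * n.choose 2) * y ^ b) := by group
      _ = x ^ (a * n) * (y ^ (b * n) * x ^ a) * (y ^ b * c ^ (a * b * n.choose 2)) := by
            rw [hce (y ^ b)]
      _ = x ^ (a * n) * (x ^ a * y ^ (b * n) * c ^ (a * (b * n))) * (y ^ b * c ^ (a * b * n.choose 2)) := by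
            rw [hswap]
      _ = (x ^ (a * n) * x ^ a) * (y ^ (b * n) * (c ^ (a * (b * n)) * y ^ b)) * c ^ (a * b * n.choose 2) := by
            group
      _ = (x ^ (a * n) * x ^ a) * (y ^ (b * n) * (y ^ b * c ^ (a * (b * n)))) * c ^ (a * b * n.choose 2) := by
            rw [hce (y ^ b)]
      _ = (x ^ (a * n) * x ^ a) * (y ^ (b * n) * y ^ b) * (c ^ (a * (b * n)) * c ^ (a * b * n.choose 2)) := by
            group
      _ = x ^ (a * (n + 1)) * y ^ (b * (n + 1)) * c ^ (a * b * (n + 1).choose 2) := by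
            have e1 : a * n + a = a * (n + 1) := by ring
            have e2 : b * n + b = b * (n + 1) := by ring
            have e3 : a * (b * n) + a * b * n.choose 2 = a * b * (n + 1).choose 2 := by
              rw [Nat.choose_succ_succ, Nat.choose_one_right]; ring
            rw [← pow_add, ← pow_add, ← pow_add, e1, e2, e3]

private lemma pair_rep {u v : H} (huv : Commute u v) {A B : ℕ}
    (hA : 1 ≤ A) (hB : 1 ≤ B) (hu : u ^ A = 1) (hv : v ^ B = 1) :
    ∀ g ∈ Subgroup.closure ({u, v} : Set H), ∃ i j : ℕ, g = u ^ i * v ^ j := by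
  intro g hg
  induction hg using Subgroup.closure_induction with
  | mem g hgm =>
    rcases hgm with rfl | rfl
    · exact ⟨1, 0, by simp⟩
    · exact ⟨0, 1, by simp⟩
  | one => exact ⟨0, 0, by simp⟩
  | mul a b _ _ ha hb =>
    obtain ⟨i, j, rfl⟩ := ha
    obtain ⟨i', j', rfl⟩ := hb
    refine ⟨i + i', j + j', ?_⟩
    have hsw : v ^ j * u ^ i' = u ^ i' * v ^ j := (huv.symm.pow_pow j i').eq
    calc u ^ i * v ^ j * (u ^ i' * v ^ j') = u ^ i * (v ^ j * u ^ i') * v ^ j' := by group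
      _ = u ^ i * (u ^ i' * v ^ j) * v ^ j' := by rw [hsw]
      _ = (u ^ i * u ^ i') * (v ^ j * v ^ j') := by group
      _ = u ^ (i + i') * v ^ (j + j') := by rw [← pow_add, ← pow_add]
  | inv a _ ha =>
    obtain ⟨i, j, rfl⟩ := ha
    refine ⟨(A - 1) * i, (B - 1) * j, ?_⟩
    have hui : u⁻¹ = u ^ (A - 1) := by
      refine inv_eq_of_mul_eq_one_left ?_
      rw [← pow_succ, Nat.sub_add_cancel hA, hu]
    have hvi : v⁻¹ = v ^ (B - 1) := by
      refine inv_eq_of_mul_eq_one_left ?_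
      rw [← pow_succ, Nat.sub_add_cancel hB, hv]
    have hsw : v ^ ((B - 1) * j) * u ^ ((A - 1) * i) = u ^ ((A - 1) * i) * v ^ ((B - 1) * j) :=
      (huv.symm.pow_pow _ _).eq
    calc (u ^ i * v ^ j)⁻¹ = (v ^ j)⁻¹ * (u ^ i)⁻¹ := by group
      _ = (v⁻¹) ^ j * (u⁻¹) ^ i := by rw [inv_pow, inv_pow]
      _ = (v ^ (B - 1)) ^ j * (u ^ (A - 1)) ^ i := by rw [hui, hvi]
      _ = v ^ ((B - 1) * j) * u ^ ((A - 1) * i) := by rw [← pow_mul, ← pow_mul]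
      _ = u ^ ((A - 1) * i) * v ^ ((B - 1) * j) := hsw

end Helpers



/-- Membership in family 𝒢₃: `G = ⟨x, y, t₁, t₂⟩`, `Z(G) = ⟨t₁⟩ × ⟨t₂⟩`,
`o(t₁) = p^{m₁}`, `o(t₂) = p^{m₂}`, `x^p = 1`, `y^p = t₂`, `[x,y] = t₁^{p^{m₁-1}}`. -/
def InFamilyG3 (p m₁ m₂ : ℕ) (G : Type*) [Group G] : Prop :=
  ∃ x y t₁ t₂ : G,
    Subgroup.closure {x, y, t₁, t₂} = ⊤ ∧
    Subgroup.center G = Subgroup.closure {t₁, t₂} ∧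
    Subgroup.zpowers t₁ ⊓ Subgroup.zpowers t₂ = ⊥ ∧
    orderOf t₁ = p ^ m₁ ∧ orderOf t₂ = p ^ m₂ ∧
    x ^ p = 1 ∧ y ^ p = t₂ ∧
    x⁻¹ * y⁻¹ * x * y = t₁ ^ p ^ (m₁ - 1)

/-- Membership in family 𝒢₄: as 𝒢₃ but with `x^p = t₁`, `y^p = t₂`. -/
def InFamilyG4 (p m₁ m₂ : ℕ) (G : Type*) [Group G] : Prop :=
  ∃ x y t₁ t₂ : G,
    Subgroup.closure {x, y, t₁, t₂} = ⊤ ∧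
    Subgroup.center G = Subgroup.closure {t₁, t₂} ∧
    Subgroup.zpowers t₁ ⊓ Subgroup.zpowers t₂ = ⊥ ∧
    orderOf t₁ = p ^ m₁ ∧ orderOf t₂ = p ^ m₂ ∧
    x ^ p = t₁ ∧ y ^ p = t₂ ∧
    x⁻¹ * y⁻¹ * x * y = t₁ ^ p ^ (m₁ - 1)

/-- Membership in family 𝒢₅: `G = ⟨x, y, t₁, u₁⟩`, `Z(G) = ⟨t₁⟩ × ⟨u₁⟩`,
`o(t₁) = p^{m₁}`, `o(u₁) = ∞`, `x^p = 1`, `y^p = u₁`, `[x,y] = t₁^{p^{m₁-1}}`. -/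
def InFamilyG5 (p m₁ : ℕ) (G : Type*) [Group G] : Prop :=
  ∃ x y t₁ u₁ : G,
    Subgroup.closure {x, y, t₁, u₁} = ⊤ ∧
    Subgroup.center G = Subgroup.closure {t₁, u₁} ∧
    Subgroup.zpowers t₁ ⊓ Subgroup.zpowers u₁ = ⊥ ∧
    orderOf t₁ = p ^ m₁ ∧ ¬ IsOfFinOrder u₁ ∧
    x ^ p = 1 ∧ y ^ p = u₁ ∧
    x⁻¹ * y⁻¹ * x * y = t₁ ^ p ^ (m₁ - 1)

/-- Membership in family 𝒢₆: as 𝒢₅ but with `x^p = t₁`, `y^p = u₁`. -/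
def InFamilyG6 (p m₁ : ℕ) (G : Type*) [Group G] : Prop :=
  ∃ x y t₁ u₁ : G,
    Subgroup.closure {x, y, t₁, u₁} = ⊤ ∧
    Subgroup.center G = Subgroup.closure {t₁, u₁} ∧
    Subgroup.zpowers t₁ ⊓ Subgroup.zpowers u₁ = ⊥ ∧
    orderOf t₁ = p ^ m₁ ∧ ¬ IsOfFinOrder u₁ ∧
    x ^ p = t₁ ∧ y ^ p = u₁ ∧
    x⁻¹ * y⁻¹ * x * y = t₁ ^ p ^ (m₁ - 1)

theorem familyG4_no_noncentral_order_p (p : ℕ) (hp : p.Prime) (hodd : Odd p)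
    (G : Type*) [Group G]
    (h : ∃ m₁ m₂, 1 ≤ m₁ ∧ 1 ≤ m₂ ∧ InFamilyG4 p m₁ m₂ G) :
    ∀ w : G, w ^ p = 1 → w ∈ Subgroup.center G := by
  obtain ⟨m₁, m₂, hm₁, hm₂, x, y, t₁, t₂, hgen, hZ, hdisj, ho1, ho2, hxp, hyp, hrel⟩ := h
  intro w hw
  have ht₁Z : t₁ ∈ Subgroup.center G := by
    rw [hZ]; exact Subgroup.subset_closure (by simp)
  have ht₂Z : t₂ ∈ Subgroup.center G := by
    rw [hZ]; exact Subgroup.subset_closure (by simp)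
  set z : G := t₁ ^ p ^ (m₁ - 1) with hzdef
  have hzZ : z ∈ Subgroup.center G := pow_mem ht₁Z _
  have hzp : z ^ p = 1 := by
    rw [hzdef, ← pow_mul, ← pow_succ, Nat.sub_add_cancel hm₁, ← ho1, pow_orderOf_eq_one]
  set c₀ : G := z⁻¹ with hc₀def
  have hc₀Z : c₀ ∈ Subgroup.center G := inv_mem hzZ
  have hc₀C : ∀ g : G, Commute c₀ g := fun g => (Subgroup.mem_center_iff.mp hc₀Z g).symm
  have hc₀p : c₀ ^ p = 1 := by rw [hc₀def, inv_pow, hzp, inv_one]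
  have hswap : y * x = x * y * c₀ := by
    have h1 : x * y = y * x * z := by rw [← hrel]; group
    rw [hc₀def, h1]; group
  -- quotient
  set π : G →* G ⧸ Subgroup.center G := QuotientGroup.mk' (Subgroup.center G) with hπdef
  have hker : ∀ g : G, g ∈ Subgroup.center G → π g = 1 := by
    intro g hg
    exact (QuotientGroup.eq_one_iff g).mpr hg
  have hπx : (π x) ^ p = 1 := by rw [← map_pow, hxp]; exact hker t₁ ht₁Z
  have hπy : (π y) ^ p = 1 := by rw [← map_pow, hyp]; exact hker t₂ ht₂Z
  have hπc : Commute (π x) (π y) := by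
    open scoped commutatorElement in
    have h2 : ⁅(π x)⁻¹, (π y)⁻¹⁆ = 1 := by
      rw [commutatorElement_def, inv_inv, inv_inv, ← map_inv, ← map_inv, ← map_mul, ← map_mul,
        ← map_mul, hrel]
      exact hker z hzZ
    have h3 := commutatorElement_eq_one_iff_commute.mp h2
    simpa using h3.inv_inv
  have htopQ : (⊤ : Subgroup (G ⧸ Subgroup.center G)) ≤ Subgroup.closure {π x, π y} := by
    have h1 : (⊤ : Subgroup (G ⧸ Subgroup.center G)) =
        Subgroup.closure (π '' {x, y, t₁, t₂}) := by
      rw [← MonoidHom.map_closure, hgen,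
        Subgroup.map_top_of_surjective _ (QuotientGroup.mk'_surjective _)]
    rw [h1]
    apply (Subgroup.closure_le _).mpr
    rintro q ⟨g, hg, rfl⟩
    simp only [Set.mem_insert_iff, Set.mem_singleton_iff] at hg
    rcases hg with rfl | rfl | rfl | rfl
    · exact Subgroup.subset_closure (by simp)
    · exact Subgroup.subset_closure (by simp)
    · rw [hker _ ht₁Z]; exact one_mem _
    · rw [hker _ ht₂Z]; exact one_mem _
  obtain ⟨i, j, hwq⟩ := pair_rep hπc hp.pos hp.pos hπx hπy (π w)
    (htopQ (Subgroup.mem_top _))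
  set c : G := (x ^ i * y ^ j)⁻¹ * w with hcdef
  have hπc1 : π c = 1 := by
    rw [hcdef, map_mul, map_inv, map_mul, map_pow, map_pow, hwq]
    group
  have hcZ : c ∈ Subgroup.center G := (QuotientGroup.eq_one_iff c).mp hπc1
  have hw_eq : w = x ^ i * y ^ j * c := by rw [hcdef]; group
  have hc_cl : c ∈ Subgroup.closure ({t₁, t₂} : Set G) := by rw [← hZ]; exact hcZ
  have ht12 : Commute t₁ t₂ := (Subgroup.mem_center_iff.mp ht₁Z t₂).symm
  have hone1 : t₁ ^ (p ^ m₁) = 1 := by rw [← ho1]; exact pow_orderOf_eq_one t₁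
  have hone2 : t₂ ^ (p ^ m₂) = 1 := by rw [← ho2]; exact pow_orderOf_eq_one t₂
  obtain ⟨k, l, hc_eq⟩ := pair_rep ht12 (Nat.one_le_pow _ _ hp.pos) (Nat.one_le_pow _ _ hp.pos)
    hone1 hone2 c hc_cl
  have hcomm_c : Commute (x ^ i * y ^ j) c := Subgroup.mem_center_iff.mp hcZ _
  have hwp : (x ^ i * y ^ j * c) ^ p = (x ^ i * y ^ j) ^ p * c ^ p := hcomm_c.mul_pow p
  have hform := central_pow_formula hc₀C hswap i j p
  have hp2 : 2 < p := by
    rcases hp.two_le.lt_or_eq with h2 | h2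
    · exact h2
    · exfalso; rw [← h2] at hodd; exact (by decide : ¬ Odd 2) hodd
  have hpd : p ∣ p.choose 2 := hp.dvd_choose_self (by norm_num) hp2
  have hc₀big : c₀ ^ (i * j * p.choose 2) = 1 := by
    obtain ⟨k', hk'⟩ := hpd
    rw [hk', show i * j * (p * k') = p * (i * j * k') by ring, pow_mul, hc₀p, one_pow]
  have hxip : x ^ (i * p) = t₁ ^ i := by rw [show i * p = p * i by ring, pow_mul, hxp]
  have hyjp : y ^ (j * p) = t₂ ^ j := by rw [show j * p = p * j by ring, pow_mul, hyp]
  have hcp : c ^ p = t₁ ^ (k * p) * t₂ ^ (l * p) := by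
    rw [hc_eq, (ht12.pow_pow k l).mul_pow, ← pow_mul, ← pow_mul]
  have h1 : (x ^ i * y ^ j) ^ p * c ^ p = 1 := by rw [← hwp, ← hw_eq]; exact hw
  rw [hform, hc₀big, mul_one, hxip, hyjp, hcp] at h1
  have hsw2 : t₂ ^ j * t₁ ^ (k * p) = t₁ ^ (k * p) * t₂ ^ j := (ht12.symm.pow_pow _ _).eq
  have key : t₁ ^ (i + k * p) * t₂ ^ (j + l * p) = 1 := by
    calc t₁ ^ (i + k * p) * t₂ ^ (j + l * p)
        = t₁ ^ i * t₁ ^ (k * p) * (t₂ ^ j * t₂ ^ (l * p)) := by rw [pow_add, pow_add]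
      _ = t₁ ^ i * (t₁ ^ (k * p) * t₂ ^ j) * t₂ ^ (l * p) := by group
      _ = t₁ ^ i * (t₂ ^ j * t₁ ^ (k * p)) * t₂ ^ (l * p) := by rw [hsw2]
      _ = t₁ ^ i * t₂ ^ j * (t₁ ^ (k * p) * t₂ ^ (l * p)) := by group
      _ = 1 := h1
  have hmem1 : t₁ ^ (i + k * p) ∈ Subgroup.zpowers t₁ ⊓ Subgroup.zpowers t₂ := by
    constructor
    · exact Subgroup.pow_mem _ (Subgroup.mem_zpowers t₁) _
    · rw [eq_inv_of_mul_eq_one_left key]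
      exact Subgroup.inv_mem _ (Subgroup.pow_mem _ (Subgroup.mem_zpowers t₂) _)
  rw [hdisj] at hmem1
  have h1' : t₁ ^ (i + k * p) = 1 := Subgroup.mem_bot.mp hmem1
  have h2' : t₂ ^ (j + l * p) = 1 := by rwa [h1', one_mul] at key
  have hd1 : p ∣ i := by
    have hdd := orderOf_dvd_of_pow_eq_one h1'
    rw [ho1] at hdd
    have hpp : p ∣ i + k * p := dvd_trans (dvd_pow_self p (by omega : m₁ ≠ 0)) hdd
    exact (Nat.dvd_add_right (dvd_mul_left p k)).mp (by rwa [add_comm] at hpp)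
  have hd2 : p ∣ j := by
    have hdd := orderOf_dvd_of_pow_eq_one h2'
    rw [ho2] at hdd
    have hpp : p ∣ j + l * p := dvd_trans (dvd_pow_self p (by omega : m₂ ≠ 0)) hdd
    exact (Nat.dvd_add_right (dvd_mul_left p l)).mp (by rwa [add_comm] at hpp)
  obtain ⟨i', rfl⟩ := hd1
  obtain ⟨j', rfl⟩ := hd2
  rw [hw_eq]
  have hx' : x ^ (p * i') ∈ Subgroup.center G := by
    rw [pow_mul, hxp]; exact pow_mem ht₁Z i'
  have hy' : y ^ (p * j') ∈ Subgroup.center G := by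
    rw [pow_mul, hyp]; exact pow_mem ht₂Z j'
  exact mul_mem (mul_mem hx' hy') hcZ
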